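/- Under the hypotheses of the previous statement, for every complex $s$ with $\Re(s) > 0$, the Laplace transform of $u$ satisfies $\int_0^\infty e^{-st} u(t)\,dt = \sum_{n\ge 0} \frac{\epsilon\sqrt{\lambda_n} - \sin(\epsilon\sqrt{\lambda_n})}{\lambda_n^2}\,\frac{2\sqrt{\lambda_n}}{(s^2 + \lambda_n)\,\alpha_n^2}$. -/

import Mathlib

open Real Filter MeasureTheory Complex

lemma lap_integrableOn_cexp (c : ℂ) (hc : c.re < 0) :
    IntegrableOn (fun t : ℝ => Complex.exp (c * t)) (Set.Ioi 0) := by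
  refine Integrable.mono' (g := fun t : ℝ => Real.exp (-(-c.re) * t))
    (exp_neg_integrableOn_Ioi 0 (by linarith)) ?_ ?_
  · exact (Complex.continuous_exp.comp (by continuity)).aestronglyMeasurable
  · refine ae_of_all _ fun t => ?_
    rw [Complex.norm_exp]
    simp [Complex.mul_re]

lemma lap_integral_cexp (c : ℂ) (hc : c.re < 0) :
    ∫ t in Set.Ioi (0:ℝ), Complex.exp (c * t) = -1 / c := by
  have hc0 : c ≠ 0 := fun h => by simp [h] at hc
  have hderiv : ∀ t ∈ Set.Ioi (0:ℝ),
      HasDerivAt (fun t : ℝ => Complex.exp (c * t) / c) (Complex.exp (c * t)) t := by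
    intro t _
    have h1 : HasDerivAt (fun t : ℝ => c * (t : ℂ)) c t := by
      simpa using (Complex.ofRealCLM.hasDerivAt (x := t)).const_mul c
    have := (h1.cexp).div_const c
    simpa [mul_comm, mul_div_assoc, mul_div_cancel_left₀ _ hc0] using this
  have htend : Tendsto (fun t : ℝ => Complex.exp (c * t) / c) atTop (nhds 0) := by
    rw [tendsto_zero_iff_norm_tendsto_zero]
    have : (fun t : ℝ => ‖Complex.exp (c * t) / c‖)
        = fun t : ℝ => Real.exp (c.re * t) * ‖c‖⁻¹ := by
      funext t
      rw [norm_div, Complex.norm_exp]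
      simp [Complex.mul_re, div_eq_mul_inv]
    rw [this]
    have h2 : Tendsto (fun t : ℝ => c.re * t) atTop atBot := by
      simpa using Tendsto.const_mul_atTop_of_neg hc tendsto_id
    simpa using (Real.tendsto_exp_comp_nhds_zero.mpr h2).mul_const ‖c‖⁻¹
  have hcont : ContinuousWithinAt (fun t : ℝ => Complex.exp (c * t) / c) (Set.Ici 0) 0 := by
    exact ((Complex.continuous_exp.comp (by continuity)).div_const c).continuousWithinAt
  have := integral_Ioi_of_hasDerivAt_of_tendsto hcont hderiv
    (lap_integrableOn_cexp c hc) htend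
  simpa [neg_div] using this

lemma lap_ne_zero (s : ℂ) (hs : 0 < s.re) (r : ℝ) (hr : 0 ≤ r) :
    s ^ 2 + (r : ℂ) ≠ 0 := by
  intro h
  rw [Complex.ext_iff] at h
  simp only [Complex.add_re, Complex.add_im, Complex.ofReal_re, Complex.ofReal_im,
    Complex.zero_re, Complex.zero_im, pow_two, Complex.mul_re, Complex.mul_im] at h
  obtain ⟨h1, h2⟩ := h
  have h3 : s.re * s.im = 0 := by linarith
  rcases mul_eq_zero.mp h3 with h4 | h4
  · linarith
  · rw [h4] at h1; nlinarith

lemma lap_integrableOn_exp_sin (s : ℂ) (hs : 0 < s.re) (ω : ℝ) :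
    IntegrableOn (fun t : ℝ => Complex.exp (-s * t) * (Real.sin (t * ω) : ℂ))
      (Set.Ioi 0) := by
  refine Integrable.mono' (g := fun t : ℝ => Real.exp (-s.re * t))
    (exp_neg_integrableOn_Ioi 0 hs) ?_ ?_
  · exact ((Complex.continuous_exp.comp (by continuity)).mul
      (Complex.continuous_ofReal.comp (by continuity))).aestronglyMeasurable
  · refine ae_of_all _ fun t => ?_
    rw [norm_mul, Complex.norm_exp]
    have h1 : (-s * (t:ℂ)).re = -s.re * t := by simp [Complex.mul_re]
    rw [h1]
    have h2 : ‖(Real.sin (t * ω) : ℂ)‖ ≤ 1 := by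
      rw [Complex.norm_real, Real.norm_eq_abs]
      exact Real.abs_sin_le_one _
    nlinarith [Real.exp_pos (-s.re * t)]

lemma lap_integral_exp_sin (s : ℂ) (hs : 0 < s.re) (ω : ℝ) :
    ∫ t in Set.Ioi (0:ℝ), Complex.exp (-s * t) * (Real.sin (t * ω) : ℂ)
      = (ω : ℂ) / (s ^ 2 + (ω : ℂ) ^ 2) := by
  set a : ℂ := -s - Complex.I * ω with ha
  set b : ℂ := -s + Complex.I * ω with hb
  have hare : a.re < 0 := by simp [ha, Complex.sub_re, Complex.mul_re]; linarith
  have hbre : b.re < 0 := by simp [hb, Complex.add_re, Complex.mul_re]; linarith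
  have ha0 : a ≠ 0 := fun h => by simp [h] at hare
  have hb0 : b ≠ 0 := fun h => by simp [h] at hbre
  have key : ∀ t : ℝ, Complex.exp (-s * t) * (Real.sin (t * ω) : ℂ)
      = (Complex.exp (a * t) - Complex.exp (b * t)) * (Complex.I / 2) := by
    intro t
    rw [Complex.ofReal_sin, Complex.sin,
      show a * t = -s * t + (-(((t:ℂ) * ω)) * Complex.I) by push_cast [ha]; ring,
      show b * t = -s * t + ((t:ℂ) * ω * Complex.I) by push_cast [hb]; ring,
      Complex.exp_add, Complex.exp_add]
    push_cast
    ring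
  calc ∫ t in Set.Ioi (0:ℝ), Complex.exp (-s * t) * (Real.sin (t * ω) : ℂ)
      = ∫ t in Set.Ioi (0:ℝ), (Complex.exp (a * t) - Complex.exp (b * t)) * (Complex.I / 2) := by
        exact integral_congr_ae (ae_of_all _ fun t => key t)
    _ = ((∫ t in Set.Ioi (0:ℝ), Complex.exp (a * t))
          - ∫ t in Set.Ioi (0:ℝ), Complex.exp (b * t)) * (Complex.I / 2) := by
        rw [integral_mul_const, integral_sub (lap_integrableOn_cexp a hare)
          (lap_integrableOn_cexp b hbre)]
    _ = (-1 / a - -1 / b) * (Complex.I / 2) := by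
        rw [lap_integral_cexp a hare, lap_integral_cexp b hbre]
    _ = (ω : ℂ) / (s ^ 2 + (ω : ℂ) ^ 2) := by
        have hab : a * b = s ^ 2 + (ω : ℂ) ^ 2 := by
          rw [ha, hb]; ring_nf; rw [Complex.I_sq]; ring
        have hne : s ^ 2 + (ω : ℂ) ^ 2 ≠ 0 := by
          rw [← hab]; exact mul_ne_zero ha0 hb0
        field_simp
        rw [ha, hb]; ring_nf; rw [Complex.I_sq]; ring

theorem laplace_transform_of_trace
    (ε c δ : ℝ) (hε : 0 < ε) (hc : 0 < c) (hδ : 0 < δ)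
    (lam : ℕ → ℝ) (hlam : ∀ n, 0 < lam n)
    (hgrow : ∀ n : ℕ, 1 ≤ n → c * (n:ℝ)^2 ≤ lam n)
    (α2 : ℕ → ℝ) (hα : ∀ n, δ ≤ α2 n)
    (u : ℝ → ℝ)
    (hu : ∀ t : ℝ, u t = ∑' n : ℕ,
      2 * (ε * Real.sqrt (lam n) - Real.sin (ε * Real.sqrt (lam n))) / (lam n)^2 *
        (Real.sin (t * Real.sqrt (lam n)) / α2 n))
    (s : ℂ) (hs : 0 < s.re) :
    ∫ t in Set.Ioi (0:ℝ), Complex.exp (-s * t) * (u t : ℂ) =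
      ∑' n : ℕ,
        ((ε * Real.sqrt (lam n) - Real.sin (ε * Real.sqrt (lam n))) / (lam n)^2 : ℂ) *
          (2 * (Real.sqrt (lam n) : ℂ) / ((s^2 + (lam n : ℂ)) * (α2 n : ℂ))) := by
  have hα2pos : ∀ n, 0 < α2 n := fun n => lt_of_lt_of_le hδ (hα n)
  set σ : ℕ → ℝ := fun n => Real.sqrt (lam n) with hσdef
  set d : ℕ → ℝ := fun n => 2 * (ε * σ n - Real.sin (ε * σ n)) / (lam n)^2 with hddef
  have hσ0 : ∀ n, 0 ≤ σ n := fun n => Real.sqrt_nonneg _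
  have hσsq : ∀ n, σ n ^ 2 = lam n := fun n => Real.sq_sqrt (hlam n).le
  set F : ℕ → ℝ → ℂ := fun n t =>
    Complex.exp (-s * t) * ((d n * (Real.sin (t * σ n) / α2 n) : ℝ) : ℂ) with hFdef
  -- summability of |d n|
  have hdsum : Summable fun n => |d n| := by
    have hsum2 : Summable fun n : ℕ => 2*(ε+1)/c * (1 / (n:ℝ)^2) :=
      (Real.summable_one_div_nat_pow.mpr one_lt_two).mul_left _
    refine Summable.of_norm_bounded_eventually hsum2 ?_
    rw [Nat.cofinite_eq_atTop]
    filter_upwards [Filter.eventually_ge_atTop (max 1 (⌈1/c⌉₊ + 1))] with n hn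
    have hn1 : (1:ℕ) ≤ n := le_trans (le_max_left _ _) hn
    have hn1' : (1:ℝ) ≤ (n:ℝ) := by exact_mod_cast hn1
    have hceil : (⌈1/c⌉₊ : ℝ) + 1 ≤ (n:ℝ) := by
      have : ⌈1/c⌉₊ + 1 ≤ n := le_trans (le_max_right _ _) hn
      exact_mod_cast this
    have hcn : 1 ≤ c * (n:ℝ) := by
      have h1 : 1/c ≤ (n:ℝ) := le_trans (Nat.le_ceil _) (by linarith)
      rw [div_le_iff₀ hc] at h1
      nlinarith
    have hlg : c * (n:ℝ)^2 ≤ lam n := hgrow n hn1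
    have hlg1 : 1 ≤ lam n := by nlinarith
    have hσle : σ n ≤ lam n := by
      rw [hσdef]
      rw [Real.sqrt_le_left (by linarith)]
      nlinarith
    have habs : |ε * σ n - Real.sin (ε * σ n)| ≤ ε * σ n + 1 := by
      have h1 := Real.abs_sin_le_one (ε * σ n)
      have h2 : 0 ≤ ε * σ n := mul_nonneg hε.le (hσ0 n)
      have := abs_sub (ε * σ n) (Real.sin (ε * σ n))
      rw [_root_.abs_of_nonneg h2] at this
      linarith
    have hbound : |d n| ≤ 2*(ε * σ n + 1)/(lam n)^2 := by
      rw [hddef]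
      simp only
      rw [abs_div, abs_of_pos (by positivity : (0:ℝ) < (lam n)^2)]
      gcongr
      calc |2 * (ε * σ n - Real.sin (ε * σ n))| = 2 * |ε * σ n - Real.sin (ε * σ n)| := by
            rw [abs_mul]; norm_num
        _ ≤ 2 * (ε * σ n + 1) := by linarith
    rw [Real.norm_eq_abs, _root_.abs_abs]
    have hcn2 : (0:ℝ) < c * (n:ℝ)^2 := by positivity
    have hnum : 2*(ε * σ n + 1) ≤ 2*(ε+1)*lam n := by
      nlinarith [mul_le_mul_of_nonneg_left hσle hε.le]
    have hn0 : (0:ℝ) < (n:ℝ) := by linarith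
    calc |d n| ≤ 2*(ε * σ n + 1)/(lam n)^2 := hbound
      _ ≤ (2*(ε+1)*lam n)/(c*(n:ℝ)^2*lam n) := by
          refine div_le_div₀ (by positivity) hnum (by positivity) ?_
          nlinarith
      _ = 2*(ε+1)/c * (1/(n:ℝ)^2) := by
          have h0 : lam n ≠ 0 := (hlam n).ne'
          field_simp
  -- integrability of each term
  have hFint : ∀ n, Integrable (F n) (volume.restrict (Set.Ioi 0)) := by
    intro n
    have : F n = fun t : ℝ => ((d n / α2 n : ℝ) : ℂ) *
        (Complex.exp (-s * t) * (Complex.ofReal (Real.sin (t * σ n)))) := by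
      funext t; rw [hFdef]; push_cast; ring
    rw [this]
    exact (lap_integrableOn_exp_sin s hs (σ n)).const_mul _
  -- summability of integrals of norms
  have hFnorm : Summable fun n => ∫ t in Set.Ioi (0:ℝ), ‖F n t‖ := by
    set K := ∫ t in Set.Ioi (0:ℝ), Real.exp (-s.re * t) with hK
    have hKint : IntegrableOn (fun t : ℝ => Real.exp (-s.re * t)) (Set.Ioi 0) :=
      exp_neg_integrableOn_Ioi 0 hs
    have hle : ∀ n t, ‖F n t‖ ≤ |d n|/δ * Real.exp (-s.re * t) := by
      intro n t
      rw [hFdef]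
      simp only
      rw [norm_mul, Complex.norm_exp]
      have h1 : (-s * (t:ℂ)).re = -s.re * t := by simp [Complex.mul_re]
      rw [h1, Complex.norm_real, Real.norm_eq_abs]
      have h2 : |d n * (Real.sin (t * σ n) / α2 n)| ≤ |d n|/δ := by
        rw [abs_mul]
        have h3 : |Real.sin (t * σ n) / α2 n| ≤ 1/δ := by
          rw [abs_div, abs_of_pos (hα2pos n)]
          exact div_le_div₀ zero_le_one (Real.abs_sin_le_one _) hδ (hα n)
        calc |d n| * |Real.sin (t * σ n) / α2 n| ≤ |d n| * (1/δ) := by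
              gcongr
          _ = |d n|/δ := by rw [mul_one_div]
      calc Real.exp (-s.re * t) * |d n * (Real.sin (t * σ n) / α2 n)|
          ≤ Real.exp (-s.re * t) * (|d n|/δ) := by
            gcongr
        _ = |d n|/δ * Real.exp (-s.re * t) := by ring
    refine Summable.of_nonneg_of_le
      (fun n => integral_nonneg fun t => norm_nonneg _)
      (fun n => ?_) ((hdsum.div_const δ).mul_right K)
    calc (∫ t in Set.Ioi (0:ℝ), ‖F n t‖)
        ≤ ∫ t in Set.Ioi (0:ℝ), |d n|/δ * Real.exp (-s.re * t) :=
          integral_mono (hFint n).norm (hKint.const_mul _) (hle n)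
      _ = |d n|/δ * K := by rw [MeasureTheory.integral_const_mul]
  -- main calculation
  calc ∫ t in Set.Ioi (0:ℝ), Complex.exp (-s * t) * (u t : ℂ)
      = ∫ t in Set.Ioi (0:ℝ), ∑' n, F n t := by
        refine integral_congr_ae (ae_of_all _ fun t => ?_)
        show Complex.exp (-s * t) * (u t : ℂ) = ∑' n, F n t
        rw [hu t, Complex.ofReal_tsum, ← tsum_mul_left]
    _ = ∑' n, ∫ t in Set.Ioi (0:ℝ), F n t :=
        (integral_tsum_of_summable_integral_norm hFint hFnorm).symm
    _ = ∑' n : ℕ,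
        ((ε * Real.sqrt (lam n) - Real.sin (ε * Real.sqrt (lam n))) / (lam n)^2 : ℂ) *
          (2 * (Real.sqrt (lam n) : ℂ) / ((s^2 + (lam n : ℂ)) * (α2 n : ℂ))) := by
        refine tsum_congr fun n => ?_
        have hre : F n = fun t : ℝ => ((d n / α2 n : ℝ) : ℂ) *
            (Complex.exp (-s * t) * (Complex.ofReal (Real.sin (t * σ n)))) := by
          funext t; rw [hFdef]; push_cast; ring
        rw [hre, MeasureTheory.integral_const_mul, lap_integral_exp_sin s hs (σ n)]
        have hσc : ((σ n : ℝ) : ℂ)^2 = ((lam n : ℝ) : ℂ) := by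
          rw [← Complex.ofReal_pow, hσsq n]
        rw [hσc]
        have hne := lap_ne_zero s hs (lam n) (hlam n).le
        have hlg0 : ((lam n : ℝ) : ℂ) ≠ 0 := by
          exact_mod_cast Complex.ofReal_ne_zero.mpr (hlam n).ne'
        have hα0 : ((α2 n : ℝ) : ℂ) ≠ 0 := Complex.ofReal_ne_zero.mpr (hα2pos n).ne'
        rw [hddef]
        push_cast
        field_simp
        ring
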